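/- Let k ∈ ℕ, let M ∈ 𝔽₂^{k×k} be skew-symmetric, and let w ∈ 𝔽₂^k. Define u_{M,w} ∈ ℝ^{𝔽₂^k} by u_{M,w}(x) := 2^{−k/2}·(−1)^{Q_M(x)+wᵀx}, and define the operator P_{M,w} := 2^{−k}·∑_{p∈𝔽₂^k} (−1)^{Q_M(p)+wᵀp}·X_p Z_{Mp} on ℝ^{𝔽₂^k}. Then P_{M,w} equals the rank-one orthogonal projection u_{M,w} u_{M,w}ᵀ onto the span of u_{M,w}; in particular P_{M,w}² = P_{M,w}, P_{M,w} is self-adjoint, and its trace equals 1. -/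
import Mathlib


open Matrix

/-- The quadratic form `Q_M(x) = xᵀ M̃ x` where `M̃` is the strictly upper-triangular
part of `M`. -/
def Qform (k : ℕ) (M : Matrix (Fin k) (Fin k) (ZMod 2)) (x : Fin k → ZMod 2) : ZMod 2 :=
  x ⬝ᵥ (Matrix.of fun i j : Fin k => if (i : ℕ) < (j : ℕ) then M i j else 0).mulVec x

/-- The translation operator `(X_p f)(x) = f(x + p)` on `ℝ^{𝔽₂^k}`. -/
def Xop (k : ℕ) (p : Fin k → ZMod 2) (f : (Fin k → ZMod 2) → ℝ) :
    (Fin k → ZMod 2) → ℝ :=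
  fun x => f (x + p)

/-- The modulation operator `(Z_q f)(x) = (−1)^{qᵀx}·f(x)` on `ℝ^{𝔽₂^k}`. -/
def Zop (k : ℕ) (q : Fin k → ZMod 2) (f : (Fin k → ZMod 2) → ℝ) :
    (Fin k → ZMod 2) → ℝ :=
  fun x => (-1 : ℝ) ^ (q ⬝ᵥ x).val * f x

/-- The vector `u_{M,w} ∈ ℝ^{𝔽₂^k}` with `u_{M,w}(x) = 2^{−k/2}·(−1)^{Q_M(x)+wᵀx}`. -/
noncomputable def kerdockVec (k : ℕ) (M : Matrix (Fin k) (Fin k) (ZMod 2))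
    (w : Fin k → ZMod 2) (x : Fin k → ZMod 2) : ℝ :=
  ((Real.sqrt 2)⁻¹) ^ k * (-1 : ℝ) ^ (Qform k M x + w ⬝ᵥ x).val

/-- The operator `P_{M,w} = 2^{−k}·∑_p (−1)^{Q_M(p)+wᵀp}·X_p Z_{Mp}` on `ℝ^{𝔽₂^k}`. -/
noncomputable def Pop (k : ℕ) (M : Matrix (Fin k) (Fin k) (ZMod 2))
    (w : Fin k → ZMod 2) (f : (Fin k → ZMod 2) → ℝ) : (Fin k → ZMod 2) → ℝ :=
  fun x => ((2 : ℝ) ^ k)⁻¹ *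
    ∑ p : Fin k → ZMod 2,
      (-1 : ℝ) ^ (Qform k M p + w ⬝ᵥ p).val * Xop k p (Zop k (M.mulVec p) f) x

private lemma negpow_mod (n : ℕ) : ((-1:ℝ))^(n % 2) = (-1)^n := by
  conv_rhs => rw [← Nat.div_add_mod n 2]
  rw [pow_add, pow_mul, neg_one_sq, one_pow, one_mul]

private lemma chi_add (a b : ZMod 2) :
    ((-1:ℝ))^((a+b).val) = (-1:ℝ)^a.val * (-1:ℝ)^b.val := by
  rw [ZMod.val_add, negpow_mod, pow_add]

private def Mup (k : ℕ) (M : Matrix (Fin k) (Fin k) (ZMod 2)) :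
    Matrix (Fin k) (Fin k) (ZMod 2) :=
  Matrix.of fun i j : Fin k => if (i : ℕ) < (j : ℕ) then M i j else 0

private lemma Qform_eq (k : ℕ) (M : Matrix (Fin k) (Fin k) (ZMod 2)) (x : Fin k → ZMod 2) :
    Qform k M x = x ⬝ᵥ (Mup k M) *ᵥ x := rfl

private lemma Mdecomp {k : ℕ} (M : Matrix (Fin k) (Fin k) (ZMod 2))
    (hdiag : ∀ i, M i i = 0) (hsym : ∀ i j, M i j = M j i) :
    M = Mup k M + (Mup k M)ᵀ := by
  ext i j
  simp only [Mup, Matrix.add_apply, Matrix.transpose_apply, Matrix.of_apply]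
  rcases lt_trichotomy (i : ℕ) (j : ℕ) with h | h | h
  · simp [h, not_lt.2 h.le]
  · have : i = j := Fin.ext h
    subst this
    simp [hdiag]
  · simp [h, not_lt.2 h.le, hsym i j]

private lemma aux1 {k : ℕ} (A : Matrix (Fin k) (Fin k) (ZMod 2)) (x y : Fin k → ZMod 2) :
    ((A + Aᵀ) *ᵥ x) ⬝ᵥ y = x ⬝ᵥ A *ᵥ y + y ⬝ᵥ A *ᵥ x := by
  rw [add_mulVec, add_dotProduct, dotProduct_comm (Aᵀ *ᵥ x) y,
    dotProduct_mulVec, vecMul_transpose, dotProduct_comm (A *ᵥ y) x,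
    dotProduct_comm (A *ᵥ x) y]
  ring

private lemma key {k : ℕ} (M : Matrix (Fin k) (Fin k) (ZMod 2))
    (hdiag : ∀ i, M i i = 0) (hsym : ∀ i j, M i j = M j i)
    (w x y : Fin k → ZMod 2) :
    Qform k M (x + y) + w ⬝ᵥ (x + y) + (M *ᵥ (x + y)) ⬝ᵥ y
      = (Qform k M x + w ⬝ᵥ x) + (Qform k M y + w ⬝ᵥ y) := by
  have h2 : ∀ a : ZMod 2, a + a = 0 := by decide
  have hM : M = Mup k M + (Mup k M)ᵀ := Mdecomp M hdiag hsym
  rw [Qform_eq, Qform_eq, Qform_eq]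
  generalize Mup k M = A at hM ⊢
  rw [hM, aux1]
  simp only [mulVec_add, dotProduct_add, add_dotProduct]
  linear_combination h2 (x ⬝ᵥ A *ᵥ y + y ⬝ᵥ A *ᵥ x) + h2 (y ⬝ᵥ A *ᵥ y)

/-- For skew-symmetric `M ∈ 𝔽₂^{k×k}` and `w ∈ 𝔽₂^k`, the operator
`P_{M,w}` equals the rank-one orthogonal projection `u_{M,w} u_{M,w}ᵀ`
(i.e. `f ↦ ⟨u_{M,w}, f⟩·u_{M,w}`); in particular `P_{M,w}² = P_{M,w}`, `P_{M,w}` is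
self-adjoint, and its trace equals `1`. -/
theorem stmt_14 (k : ℕ) (M : Matrix (Fin k) (Fin k) (ZMod 2))
    (hdiag : ∀ i, M i i = 0) (hsym : ∀ i j, M i j = M j i)
    (w : Fin k → ZMod 2) :
    (∀ f : (Fin k → ZMod 2) → ℝ,
      Pop k M w f = fun x =>
        (∑ y : Fin k → ZMod 2, kerdockVec k M w y * f y) * kerdockVec k M w x) ∧
    (∀ f : (Fin k → ZMod 2) → ℝ, Pop k M w (Pop k M w f) = Pop k M w f) ∧
    (∀ f g : (Fin k → ZMod 2) → ℝ,
      ∑ x : Fin k → ZMod 2, Pop k M w f x * g x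
        = ∑ x : Fin k → ZMod 2, f x * Pop k M w g x) ∧
    (∑ x : Fin k → ZMod 2,
        Pop k M w (fun y => if y = x then (1 : ℝ) else 0) x = 1) := by
  have h2 : ∀ a : ZMod 2, a + a = 0 := by decide
  have hc : ((Real.sqrt 2)⁻¹ : ℝ)^k * ((Real.sqrt 2)⁻¹)^k = ((2:ℝ)^k)⁻¹ := by
    rw [← mul_pow, ← mul_inv, Real.mul_self_sqrt (by norm_num), inv_pow]
  have hxp : ∀ x p : Fin k → ZMod 2, x + (x + p) = p := by
    intro x p
    funext i
    show x i + (x i + p i) = p i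
    rw [← add_assoc, h2, zero_add]
  have hterm : ∀ x p : Fin k → ZMod 2,
      (-1:ℝ)^(Qform k M p + w ⬝ᵥ p).val * (-1:ℝ)^((M *ᵥ p) ⬝ᵥ (x+p)).val
        = (-1:ℝ)^(Qform k M x + w ⬝ᵥ x).val
          * (-1:ℝ)^(Qform k M (x+p) + w ⬝ᵥ (x+p)).val := by
    intro x p
    rw [← chi_add, ← chi_add]
    have h := key M hdiag hsym w x (x+p)
    rw [hxp] at h
    exact congrArg (fun a : ZMod 2 => ((-1:ℝ))^a.val) h
  have hnorm : ∑ y : Fin k → ZMod 2, kerdockVec k M w y * kerdockVec k M w y = 1 := by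
    have hone : ∀ y : Fin k → ZMod 2,
        kerdockVec k M w y * kerdockVec k M w y = ((2:ℝ)^k)⁻¹ := by
      intro y
      unfold kerdockVec
      rw [show ∀ a b c d : ℝ, a * b * (c * d) = (a * c) * (b * d) from fun a b c d => by ring,
        hc, ← mul_pow]
      norm_num
    rw [Finset.sum_congr rfl fun y _ => hone y, Finset.sum_const]
    simp only [Finset.card_univ, nsmul_eq_mul]
    rw [show (Fintype.card (Fin k → ZMod 2) : ℝ) = 2^k by
      simp [Fintype.card_fun]]
    rw [mul_inv_cancel₀ (by positivity)]
  have hpart1 : ∀ f : (Fin k → ZMod 2) → ℝ,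
      Pop k M w f = fun x =>
        (∑ y : Fin k → ZMod 2, kerdockVec k M w y * f y) * kerdockVec k M w x := by
    intro f
    funext x
    show ((2:ℝ)^k)⁻¹ * ∑ p : Fin k → ZMod 2,
        (-1:ℝ)^(Qform k M p + w ⬝ᵥ p).val
          * ((-1:ℝ)^((M *ᵥ p) ⬝ᵥ (x+p)).val * f (x+p)) = _
    have step1 : ∀ p : Fin k → ZMod 2,
        (-1:ℝ)^(Qform k M p + w ⬝ᵥ p).val
            * ((-1:ℝ)^((M *ᵥ p) ⬝ᵥ (x+p)).val * f (x+p))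
          = (-1:ℝ)^(Qform k M x + w ⬝ᵥ x).val
            * ((-1:ℝ)^(Qform k M (x+p) + w ⬝ᵥ (x+p)).val * f (x+p)) := by
      intro p
      rw [← mul_assoc, ← mul_assoc, hterm x p]
    rw [Finset.sum_congr rfl fun p _ => step1 p, ← Finset.mul_sum]
    have step2 : ∑ p : Fin k → ZMod 2,
        (-1:ℝ)^(Qform k M (x+p) + w ⬝ᵥ (x+p)).val * f (x+p)
          = ∑ y : Fin k → ZMod 2, (-1:ℝ)^(Qform k M y + w ⬝ᵥ y).val * f y := by
      exact Fintype.sum_equiv (Equiv.addLeft x) _ _ fun p => rfl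
    rw [step2]
    unfold kerdockVec
    rw [show (∑ y : Fin k → ZMod 2,
        ((Real.sqrt 2)⁻¹ : ℝ)^k * (-1:ℝ)^(Qform k M y + w ⬝ᵥ y).val * f y)
        = ((Real.sqrt 2)⁻¹ : ℝ)^k
          * ∑ y : Fin k → ZMod 2, (-1:ℝ)^(Qform k M y + w ⬝ᵥ y).val * f y by
      rw [Finset.mul_sum]
      exact Finset.sum_congr rfl fun y _ => by ring]
    rw [← hc]
    ring
  refine ⟨hpart1, ?_, ?_, ?_⟩
  · intro f
    rw [hpart1 f, hpart1]
    funext x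
    congr 1
    calc ∑ y : Fin k → ZMod 2, kerdockVec k M w y
            * ((∑ z : Fin k → ZMod 2, kerdockVec k M w z * f z) * kerdockVec k M w y)
        = (∑ z : Fin k → ZMod 2, kerdockVec k M w z * f z)
            * ∑ y : Fin k → ZMod 2, kerdockVec k M w y * kerdockVec k M w y := by
          rw [Finset.mul_sum]
          exact Finset.sum_congr rfl fun y _ => by ring
      _ = ∑ y : Fin k → ZMod 2, kerdockVec k M w y * f y := by rw [hnorm, mul_one]
  · intro f g
    rw [hpart1 f, hpart1 g]
    calc ∑ x : Fin k → ZMod 2,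
            ((∑ y : Fin k → ZMod 2, kerdockVec k M w y * f y) * kerdockVec k M w x) * g x
        = (∑ y : Fin k → ZMod 2, kerdockVec k M w y * f y)
            * ∑ x : Fin k → ZMod 2, kerdockVec k M w x * g x := by
          rw [Finset.mul_sum]
          exact Finset.sum_congr rfl fun x _ => by ring
      _ = (∑ y : Fin k → ZMod 2, kerdockVec k M w y * g y)
            * ∑ x : Fin k → ZMod 2, kerdockVec k M w x * f x := by
          rw [mul_comm]
      _ = ∑ x : Fin k → ZMod 2,
            f x * ((∑ y : Fin k → ZMod 2, kerdockVec k M w y * g y) * kerdockVec k M w x) := by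
          rw [Finset.mul_sum]
          exact Finset.sum_congr rfl fun x _ => by ring
  · have : ∀ x : Fin k → ZMod 2,
        Pop k M w (fun y => if y = x then (1:ℝ) else 0) x
          = kerdockVec k M w x * kerdockVec k M w x := by
      intro x
      rw [hpart1]
      simp [Finset.sum_ite_eq', mul_comm]
    rw [Finset.sum_congr rfl fun x _ => this x, hnorm]
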